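/- Let f : [0,1] → ℝ be a C² function such that f'(0) = 0, f'' > 0 on [0,1], and ∫₀¹ f(y) dy = 0. Then ∫₀¹ f(y)² dy ≤ (1/3) f(1)². -/

import Mathlib

open Set MeasureTheory intervalIntegral Filter Topology

lemma aux_nonneg_Icc {g : ℝ → ℝ} (hc : Continuous g)
    (hp : ∀ x ∈ Set.Ioo (0:ℝ) 1, 0 < g x) : ∀ x ∈ Set.Icc (0:ℝ) 1, 0 ≤ g x := by
  intro x hx
  have hcl : x ∈ closure (Set.Ioo (0:ℝ) 1) := by
    rw [closure_Ioo one_ne_zero.symm]; exact hx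
  haveI : (𝓝[Set.Ioo (0:ℝ) 1] x).NeBot := mem_closure_iff_nhdsWithin_neBot.mp hcl
  have t1 : Filter.Tendsto g (𝓝[Set.Ioo (0:ℝ) 1] x) (𝓝 (g x)) :=
    hc.continuousAt.continuousWithinAt
  refine ge_of_tendsto t1 ?_
  filter_upwards [self_mem_nhdsWithin] with y hy
  exact (hp y hy).le

lemma key_estimate (f g1 g2 : ℝ → ℝ) (hfc : Continuous f) (hg1c : Continuous g1)
    (hg2c : Continuous g2)
    (hd1 : ∀ x ∈ Set.Ioo (0:ℝ) 1, HasDerivAt f (g1 x) x)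
    (hd2 : ∀ x ∈ Set.Ioo (0:ℝ) 1, HasDerivAt g1 (g2 x) x)
    (hpos : ∀ x ∈ Set.Ioo (0:ℝ) 1, 0 < g2 x)
    (hg10 : g1 0 = 0)
    (hint : ∫ y in (0:ℝ)..1, f y = 0) :
    ∫ y in (0:ℝ)..1, (f y)^2 ≤ (1/3) * (f 1)^2 := by
  set b := f 1 with hb
  -- primitives
  set Ψ : ℝ → ℝ := fun s => ∫ y in s..1, f y with hΨ
  set Θ : ℝ → ℝ := fun s => ∫ y in s..1, y * f y with hΘ
  set T : ℝ → ℝ := fun s => ∫ y in (0:ℝ)..s, (y - 1/3) * f y with hT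
  have hyfc : Continuous (fun y : ℝ => y * f y) := continuous_id.mul hfc
  have hy3fc : Continuous (fun y : ℝ => (y - 1/3) * f y) :=
    (continuous_id.sub continuous_const).mul hfc
  have hΨd : ∀ s : ℝ, HasDerivAt Ψ (-(f s)) s := by
    intro s
    exact integral_hasDerivAt_left (hfc.intervalIntegrable s 1)
      (hfc.stronglyMeasurableAtFilter volume (𝓝 s)) hfc.continuousAt
  have hΘd : ∀ s : ℝ, HasDerivAt Θ (-(s * f s)) s := by
    intro s
    exact integral_hasDerivAt_left (hyfc.intervalIntegrable s 1)
      (hyfc.stronglyMeasurableAtFilter volume (𝓝 s)) hyfc.continuousAt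
  have hTd : ∀ s : ℝ, HasDerivAt T ((s - 1/3) * f s) s := by
    intro s
    exact integral_hasDerivAt_right (hy3fc.intervalIntegrable 0 s)
      (hy3fc.stronglyMeasurableAtFilter volume (𝓝 s)) hy3fc.continuousAt
  set H : ℝ → ℝ := fun s => Θ s - s * Ψ s with hH
  set Φ : ℝ → ℝ := fun s => b/6 - s^2 * (b/6) - H s with hΦdef
  set φ1 : ℝ → ℝ := fun s => Ψ s - s * (b/3) with hφ1def
  have hHd : ∀ s : ℝ, HasDerivAt H (-(Ψ s)) s := by
    intro s
    have h := (hΘd s).sub ((hasDerivAt_id s).mul (hΨd s))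
    refine h.congr_deriv ?_
    simp only [id_eq]
    ring
  have hΦd : ∀ s : ℝ, HasDerivAt Φ (φ1 s) s := by
    intro s
    have h := ((hasDerivAt_const s (b/6)).sub
      ((hasDerivAt_pow 2 s).mul_const (b/6))).sub (hHd s)
    refine h.congr_deriv ?_
    simp [hφ1def]
    ring
  have hφ1d : ∀ s : ℝ, HasDerivAt φ1 (-(f s) - b/3) s := by
    intro s
    have h := (hΨd s).sub ((hasDerivAt_id s).mul_const (b/3))
    refine h.congr_deriv ?_
    ring
  have hΨc : Continuous Ψ := by
    rw [continuous_iff_continuousAt]; exact fun s => (hΨd s).differentiableAt.continuousAt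
  have hΘc : Continuous Θ := by
    rw [continuous_iff_continuousAt]; exact fun s => (hΘd s).differentiableAt.continuousAt
  have hTc : Continuous T := by
    rw [continuous_iff_continuousAt]; exact fun s => (hTd s).differentiableAt.continuousAt
  have hΦc : Continuous Φ := by
    rw [continuous_iff_continuousAt]; exact fun s => (hΦd s).differentiableAt.continuousAt
  have hφ1c : Continuous φ1 := by
    rw [continuous_iff_continuousAt]; exact fun s => (hφ1d s).differentiableAt.continuousAt
  -- basic values
  have hΨ1 : Ψ 1 = 0 := integral_same
  have hΘ1 : Θ 1 = 0 := integral_same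
  have hT0 : T 0 = 0 := integral_same
  have hΨ0 : Ψ 0 = 0 := hint
  have hH1 : H 1 = 0 := by simp [hH, hΘ1, hΨ1]
  have hΦ1 : Φ 1 = 0 := by simp [hΦdef, hH1]
  have hφ10 : φ1 0 = 0 := by simp [hφ1def, hΨ0]
  have hφ11 : φ1 1 = -(b/3) := by simp [hφ1def, hΨ1]
  -- nonnegativity of g2 on the closed interval
  have hg2nn : ∀ x ∈ Set.Icc (0:ℝ) 1, 0 ≤ g2 x := aux_nonneg_Icc hg2c hpos
  -- g1 nonneg, f monotone
  have hg1mono : MonotoneOn g1 (Set.Icc (0:ℝ) 1) := by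
    apply monotoneOn_of_deriv_nonneg (convex_Icc 0 1) hg1c.continuousOn
    · rw [interior_Icc]
      exact fun x hx => (hd2 x hx).differentiableAt.differentiableWithinAt
    · rw [interior_Icc]
      intro x hx
      rw [(hd2 x hx).deriv]
      exact (hpos x hx).le
  have hg1nn : ∀ x ∈ Set.Icc (0:ℝ) 1, 0 ≤ g1 x := by
    intro x hx
    have := hg1mono (Set.left_mem_Icc.mpr zero_le_one) hx hx.1
    rwa [hg10] at this
  have hfmono : MonotoneOn f (Set.Icc (0:ℝ) 1) := by
    apply monotoneOn_of_deriv_nonneg (convex_Icc 0 1) hfc.continuousOn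
    · rw [interior_Icc]
      exact fun x hx => (hd1 x hx).differentiableAt.differentiableWithinAt
    · rw [interior_Icc]
      intro x hx
      rw [(hd1 x hx).deriv]
      exact hg1nn x (Set.Ioo_subset_Icc_self hx)
  -- FTC identity A : ∫ w * g2 = T 1 - b/6
  have idA : ∫ s in (0:ℝ)..1, (s^3/6 - s^2/6) * g2 s = T 1 - b/6 := by
    have hVd : ∀ x ∈ Set.Ioo (0:ℝ) 1,
        HasDerivAt (fun s => (s^3/6 - s^2/6) * g1 s - (s^2/2 - s/3) * f s + T s)
          ((x^3/6 - x^2/6) * g2 x) x := by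
      intro x hx
      have h1 : HasDerivAt (fun s : ℝ => s^3/6 - s^2/6) (x^2/2 - x/3) x := by
        have := ((hasDerivAt_pow 3 x).div_const 6).sub ((hasDerivAt_pow 2 x).div_const 6)
        refine this.congr_deriv ?_
        ring
      have h2 : HasDerivAt (fun s : ℝ => s^2/2 - s/3) (x - 1/3) x := by
        have := ((hasDerivAt_pow 2 x).div_const 2).sub ((hasDerivAt_id x).div_const 3)
        refine this.congr_deriv ?_
        ring
      have h := ((h1.mul (hd2 x hx)).sub (h2.mul (hd1 x hx))).add (hTd x)
      refine h.congr_deriv ?_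
      ring
    have := integral_eq_sub_of_hasDeriv_right_of_le zero_le_one
      (Continuous.continuousOn (by fun_prop))
      (fun x hx => (hVd x hx).hasDerivWithinAt)
      (((((continuous_pow 3).div_const 6).sub ((continuous_pow 2).div_const 6)).mul
        hg2c).intervalIntegrable 0 1)
    rw [this]
    simp [hT0, hg10]
    ring
  -- Φ 0 ≥ 0
  have hT1 : T 1 = Θ 0 := by
    have hsplit : ∀ y : ℝ, (y - 1/3) * f y = y * f y - (1/3) * f y := by intro y; ring
    have : T 1 = (∫ y in (0:ℝ)..1, y * f y) - ∫ y in (0:ℝ)..1, (1/3) * f y := by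
      rw [hT]
      simp only [hsplit]
      exact integral_sub (hyfc.intervalIntegrable 0 1)
        ((hfc.const_smul (1/3 : ℝ)).intervalIntegrable 0 1)
    rw [this, intervalIntegral.integral_const_mul, hint]
    simp [hΘ]
  have hΦ0 : 0 ≤ Φ 0 := by
    have hile : ∫ s in (0:ℝ)..1, (s^3/6 - s^2/6) * g2 s ≤ 0 := by
      have h0 : 0 ≤ -∫ s in (0:ℝ)..1, (s^3/6 - s^2/6) * g2 s := by
        rw [← intervalIntegral.integral_neg]
        apply intervalIntegral.integral_nonneg zero_le_one
        intro u hu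
        have h1 : u^3 ≤ u^2 := by nlinarith [hu.1, hu.2]
        have := hg2nn u hu
        nlinarith
      linarith
    have : T 1 - b/6 ≤ 0 := idA ▸ hile
    have hΦ0v : Φ 0 = b/6 - Θ 0 := by simp [hΦdef, hH]
    rw [hΦ0v]
    rw [hT1] at this
    linarith
  -- FTC identity B
  have idB : (∫ s in (0:ℝ)..1, Φ s * g2 s)
      = b^2/3 - ∫ y in (0:ℝ)..1, (f y)^2 := by
    have hVd : ∀ x ∈ Set.Ioo (0:ℝ) 1,
        HasDerivAt (fun s => Φ s * g1 s - φ1 s * f s)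
          (Φ x * g2 x + (f x)^2 + (b/3) * f x) x := by
      intro x hx
      have h := ((hΦd x).mul (hd2 x hx)).sub ((hφ1d x).mul (hd1 x hx))
      refine h.congr_deriv ?_
      ring
    have hic : Continuous (fun s => Φ s * g2 s + (f s)^2 + (b/3) * f s) := by fun_prop
    have hVc : Continuous (fun s => Φ s * g1 s - φ1 s * f s) := by fun_prop
    have hFTC := integral_eq_sub_of_hasDeriv_right_of_le zero_le_one hVc.continuousOn
      (fun x hx => (hVd x hx).hasDerivWithinAt) (hic.intervalIntegrable 0 1)
    have hval : (Φ 1 * g1 1 - φ1 1 * f 1) - (Φ 0 * g1 0 - φ1 0 * f 0) = b^2/3 := by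
      rw [hΦ1, hφ11, hφ10, hg10]
      ring
    rw [hval] at hFTC
    have hsplit : ∫ s in (0:ℝ)..1, (Φ s * g2 s + (f s)^2 + (b/3) * f s)
        = (∫ s in (0:ℝ)..1, Φ s * g2 s) + (∫ s in (0:ℝ)..1, (f s)^2)
          + ((b/3) * ∫ s in (0:ℝ)..1, f s) := by
      rw [integral_add ((by fun_prop : Continuous (fun s => Φ s * g2 s + f s ^ 2)).intervalIntegrable 0 1)
        ((by fun_prop : Continuous (fun s => b / 3 * f s)).intervalIntegrable 0 1),
        integral_add ((by fun_prop : Continuous (fun s => Φ s * g2 s)).intervalIntegrable 0 1)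
        ((by fun_prop : Continuous (fun s => f s ^ 2)).intervalIntegrable 0 1), intervalIntegral.integral_const_mul]
    rw [hsplit, hint] at hFTC
    linarith
  -- Φ is nonnegative on [0,1]
  have hΦnn : ∀ x ∈ Set.Icc (0:ℝ) 1, 0 ≤ Φ x := by
    set S : Set ℝ := insert (0:ℝ) {s | s ∈ Set.Icc (0:ℝ) 1 ∧ f s + b/3 < 0} with hS
    have hSne : S.Nonempty := ⟨0, Set.mem_insert _ _⟩
    have hSbdd : BddAbove S := by
      refine ⟨1, ?_⟩
      rintro t (rfl | ⟨ht, _⟩)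
      · exact zero_le_one
      · exact ht.2
    set c := sSup S with hc
    have hc0 : 0 ≤ c := le_csSup hSbdd (Set.mem_insert _ _)
    have hc1 : c ≤ 1 := csSup_le hSne (by rintro t (rfl | ⟨ht, _⟩); exacts [zero_le_one, ht.2])
    have hneg : ∀ s ∈ Set.Icc (0:ℝ) 1, s < c → f s + b/3 < 0 := by
      intro s hs hlt
      obtain ⟨t, htS, hst⟩ := exists_lt_of_lt_csSup hSne hlt
      rcases htS with rfl | ⟨ht1, ht2⟩
      · exact absurd hst (not_lt.mpr hs.1)
      · have := hfmono hs ht1 hst.le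
        linarith
    have hposc : ∀ s ∈ Set.Icc (0:ℝ) 1, c < s → 0 ≤ f s + b/3 := by
      intro s hs hlt
      by_contra hcon
      push_neg at hcon
      have : s ≤ c := le_csSup hSbdd (Set.mem_insert_of_mem _ ⟨hs, hcon⟩)
      linarith
    have hφ1mono : MonotoneOn φ1 (Set.Icc 0 c) := by
      apply monotoneOn_of_deriv_nonneg (convex_Icc 0 c) hφ1c.continuousOn
      · exact fun x _ => (hφ1d x).differentiableAt.differentiableWithinAt
      · rw [interior_Icc]
        intro x hx
        rw [(hφ1d x).deriv]
        have hx1 : x ∈ Set.Icc (0:ℝ) 1 := ⟨hx.1.le, (lt_of_lt_of_le hx.2 hc1).le⟩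
        have := hneg x hx1 hx.2
        linarith
    have hφ1nn : ∀ s ∈ Set.Icc 0 c, 0 ≤ φ1 s := by
      intro s hs
      have := hφ1mono (Set.left_mem_Icc.mpr hc0) hs hs.1
      rwa [hφ10] at this
    have hΦmono : MonotoneOn Φ (Set.Icc 0 c) := by
      apply monotoneOn_of_deriv_nonneg (convex_Icc 0 c) hΦc.continuousOn
      · exact fun x _ => (hΦd x).differentiableAt.differentiableWithinAt
      · rw [interior_Icc]
        intro x hx
        rw [(hΦd x).deriv]
        exact hφ1nn x (Set.Ioo_subset_Icc_self hx)
    have hΦcnn : 0 ≤ Φ c :=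
      le_trans hΦ0 (hΦmono (Set.left_mem_Icc.mpr hc0) (Set.right_mem_Icc.mpr hc0) hc0)
    have hφ1anti : AntitoneOn φ1 (Set.Icc c 1) := by
      apply antitoneOn_of_deriv_nonpos (convex_Icc c 1) hφ1c.continuousOn
      · exact fun x _ => (hφ1d x).differentiableAt.differentiableWithinAt
      · rw [interior_Icc]
        intro x hx
        rw [(hφ1d x).deriv]
        have hx1 : x ∈ Set.Icc (0:ℝ) 1 := ⟨hc0.trans hx.1.le, hx.2.le⟩
        have := hposc x hx1 hx.1
        linarith
    have hconc : ConcaveOn ℝ (Set.Icc c 1) Φ := by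
      apply AntitoneOn.concaveOn_of_deriv (convex_Icc c 1) hΦc.continuousOn
      · exact fun x _ => (hΦd x).differentiableAt.differentiableWithinAt
      · rw [interior_Icc]
        intro x hx y hy hxy
        rw [(hΦd x).deriv, (hΦd y).deriv]
        exact hφ1anti (Set.Ioo_subset_Icc_self hx) (Set.Ioo_subset_Icc_self hy) hxy
    intro x hx
    rcases le_or_gt x c with hxc | hxc
    · have := hΦmono (Set.left_mem_Icc.mpr hc0) ⟨hx.1, hxc⟩ hx.1
      linarith [hΦ0]
    · have hclt1 : c < 1 := lt_of_lt_of_le hxc hx.2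
      have h1c : 0 < 1 - c := by linarith
      set a := (1 - x)/(1 - c) with ha
      set a' := (x - c)/(1 - c) with ha'
      have haa : 0 ≤ a := div_nonneg (by linarith [hx.2]) h1c.le
      have haa' : 0 ≤ a' := div_nonneg (by linarith) h1c.le
      have hsum : a + a' = 1 := by
        rw [ha, ha']
        field_simp
        ring
      have hpt : a * c + a' * 1 = x := by
        rw [ha, ha']
        field_simp
        ring
      have hcc := hconc.2 (Set.left_mem_Icc.mpr hclt1.le) (Set.right_mem_Icc.mpr hclt1.le)
        haa haa' hsum
      rw [smul_eq_mul, smul_eq_mul, smul_eq_mul, smul_eq_mul, hpt, hΦ1] at hcc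
      nlinarith [mul_nonneg haa hΦcnn]
  -- conclude
  have hfinal : 0 ≤ ∫ s in (0:ℝ)..1, Φ s * g2 s := by
    apply intervalIntegral.integral_nonneg zero_le_one
    intro u hu
    exact mul_nonneg (hΦnn u hu) (hg2nn u hu)
  rw [idB] at hfinal
  linarith

theorem convex_mean_zero_L2_estimate
    (f : ℝ → ℝ)
    (hf : ContDiffOn ℝ 2 f (Set.Icc 0 1))
    (hf'0 : deriv f 0 = 0)
    (hf'' : ∀ y ∈ Set.Icc (0:ℝ) 1, 0 < deriv (deriv f) y)
    (hint : ∫ y in (0:ℝ)..1, f y = 0) :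
    ∫ y in (0:ℝ)..1, (f y)^2 ≤ (1/3) * (f 1)^2 := by
  have hI : UniqueDiffOn ℝ (Set.Icc (0:ℝ) 1) := uniqueDiffOn_Icc zero_lt_one
  set d1 := derivWithin f (Set.Icc 0 1) with hd1def
  set d2 := derivWithin d1 (Set.Icc 0 1) with hd2def
  have hd1CD : ContDiffOn ℝ 1 d1 (Set.Icc 0 1) := hf.derivWithin hI (by norm_num)
  have hd2c : ContinuousOn d2 (Set.Icc 0 1) := (hd1CD.derivWithin (m := 0) hI (by norm_num)).continuousOn
  have hd1c : ContinuousOn d1 (Set.Icc 0 1) := hd1CD.continuousOn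
  have hfc : ContinuousOn f (Set.Icc 0 1) := hf.continuousOn
  have hmem : ∀ x ∈ Set.Ioo (0:ℝ) 1, Set.Icc (0:ℝ) 1 ∈ 𝓝 x :=
    fun x hx => Icc_mem_nhds hx.1 hx.2
  have h1eq : ∀ x ∈ Set.Ioo (0:ℝ) 1, d1 x = deriv f x := fun x hx =>
    derivWithin_of_mem_nhds (hmem x hx)
  have hDf : ∀ x ∈ Set.Ioo (0:ℝ) 1, HasDerivAt f (d1 x) x := by
    intro x hx
    have hdx : DifferentiableAt ℝ f x :=
      ((hf.differentiableOn (by norm_num)) x (Set.Ioo_subset_Icc_self hx)).differentiableAt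
        (hmem x hx)
    rw [h1eq x hx]
    exact hdx.hasDerivAt
  have hDd1 : ∀ x ∈ Set.Ioo (0:ℝ) 1, HasDerivAt d1 (d2 x) x := by
    intro x hx
    have hdx : DifferentiableAt ℝ d1 x :=
      ((hd1CD.differentiableOn one_ne_zero) x (Set.Ioo_subset_Icc_self hx)).differentiableAt
        (hmem x hx)
    have h2 : d2 x = deriv d1 x := derivWithin_of_mem_nhds (hmem x hx)
    rw [h2]
    exact hdx.hasDerivAt
  have h2eq : ∀ x ∈ Set.Ioo (0:ℝ) 1, d2 x = deriv (deriv f) x := by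
    intro x hx
    have hev : d1 =ᶠ[𝓝 x] deriv f :=
      Filter.eventuallyEq_of_mem (Ioo_mem_nhds hx.1 hx.2) h1eq
    have hde : deriv d1 x = deriv (deriv f) x := hev.deriv_eq
    rw [hd2def, derivWithin_of_mem_nhds (hmem x hx), hde]
  have hpos : ∀ x ∈ Set.Ioo (0:ℝ) 1, 0 < d2 x := by
    intro x hx
    rw [h2eq x hx]
    exact hf'' x (Set.Ioo_subset_Icc_self hx)
  have hd10 : d1 0 = 0 := by
    have h0 : (0:ℝ) ∈ Set.Icc (0:ℝ) 1 := Set.left_mem_Icc.mpr zero_le_one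
    have hdiff : DifferentiableAt ℝ (deriv f) 0 := by
      by_contra h
      have hz := deriv_zero_of_not_differentiableAt h
      have h2 := hf'' 0 h0
      rw [hz] at h2
      exact lt_irrefl 0 h2
    haveI : (𝓝[Set.Ioo (0:ℝ) 1] (0:ℝ)).NeBot := by
      apply mem_closure_iff_nhdsWithin_neBot.mp
      rw [closure_Ioo one_ne_zero.symm]
      exact h0
    have t1 : Filter.Tendsto d1 (𝓝[Set.Ioo (0:ℝ) 1] 0) (𝓝 (d1 0)) :=
      ((hd1c 0 h0).mono Set.Ioo_subset_Icc_self)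
    have t2 : Filter.Tendsto d1 (𝓝[Set.Ioo (0:ℝ) 1] 0) (𝓝 0) := by
      have t3 : Filter.Tendsto (deriv f) (𝓝[Set.Ioo (0:ℝ) 1] 0) (𝓝 (deriv f 0)) :=
        hdiff.continuousAt.continuousWithinAt
      rw [hf'0] at t3
      apply t3.congr'
      filter_upwards [self_mem_nhdsWithin] with z hz
      exact (h1eq z hz).symm
    exact tendsto_nhds_unique t1 t2
  set c : ℝ → ℝ := fun x => max 0 (min 1 x) with hcdef
  have hcc : Continuous c := continuous_const.max (continuous_const.min continuous_id)
  have hcmem : ∀ x, c x ∈ Set.Icc (0:ℝ) 1 :=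
    fun x => ⟨le_max_left _ _, max_le zero_le_one (min_le_left _ _)⟩
  have hceq : ∀ x ∈ Set.Icc (0:ℝ) 1, c x = x := by
    intro x hx
    rw [hcdef]
    simp only
    rw [min_eq_right hx.2, max_eq_right hx.1]
  set F := f ∘ c with hF
  set G1 := d1 ∘ c with hG1
  set G2 := d2 ∘ c with hG2
  have hFc : Continuous F := hfc.comp_continuous hcc hcmem
  have hG1c : Continuous G1 := hd1c.comp_continuous hcc hcmem
  have hG2c : Continuous G2 := hd2c.comp_continuous hcc hcmem
  have hFeq : Set.EqOn F f (Set.Icc 0 1) := by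
    intro x hx
    simp only [hF, Function.comp_apply]
    rw [hceq x hx]
  have hG1eq : Set.EqOn G1 d1 (Set.Icc 0 1) := by
    intro x hx
    simp only [hG1, Function.comp_apply]
    rw [hceq x hx]
  have hG2eq : Set.EqOn G2 d2 (Set.Icc 0 1) := by
    intro x hx
    simp only [hG2, Function.comp_apply]
    rw [hceq x hx]
  have hDF : ∀ x ∈ Set.Ioo (0:ℝ) 1, HasDerivAt F (G1 x) x := by
    intro x hx
    rw [hG1eq (Set.Ioo_subset_Icc_self hx)]
    refine (hDf x hx).congr_of_eventuallyEq ?_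
    filter_upwards [hmem x hx] with z hz
    exact hFeq hz
  have hDG1 : ∀ x ∈ Set.Ioo (0:ℝ) 1, HasDerivAt G1 (G2 x) x := by
    intro x hx
    rw [hG2eq (Set.Ioo_subset_Icc_self hx)]
    refine (hDd1 x hx).congr_of_eventuallyEq ?_
    filter_upwards [hmem x hx] with z hz
    exact hG1eq hz
  have hposG : ∀ x ∈ Set.Ioo (0:ℝ) 1, 0 < G2 x := by
    intro x hx
    rw [hG2eq (Set.Ioo_subset_Icc_self hx)]
    exact hpos x hx
  have hG10 : G1 0 = 0 := by
    rw [hG1eq (Set.left_mem_Icc.mpr zero_le_one), hd10]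
  have huIcc : Set.uIcc (0:ℝ) 1 = Set.Icc 0 1 := Set.uIcc_of_le zero_le_one
  have hintF : ∫ y in (0:ℝ)..1, F y = 0 := by
    rw [intervalIntegral.integral_congr (huIcc ▸ hFeq)]
    exact hint
  have hres := key_estimate F G1 G2 hFc hG1c hG2c hDF hDG1 hposG hG10 hintF
  have hsq : ∫ y in (0:ℝ)..1, (F y)^2 = ∫ y in (0:ℝ)..1, (f y)^2 := by
    apply intervalIntegral.integral_congr
    intro x hx
    rw [huIcc] at hx
    show F x ^ 2 = f x ^ 2
    rw [hFeq hx]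
  have hF1 : F 1 = f 1 := hFeq (Set.right_mem_Icc.mpr zero_le_one)
  rw [hsq, hF1] at hres
  exact hres
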